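/- For every natural number p and every real polynomial q of degree at most p, the squared value of q at the endpoint 0 of the unit interval satisfies q(0)² ≤ (p+1)² · ∫₀¹ q(x)² dx. -/

import Mathlib

open Polynomial intervalIntegral Finset

noncomputable def J (f : ℝ[X]) : ℝ := ∫ x in (0:ℝ)..1, f.eval x

lemma J_intervalIntegrable (f : ℝ[X]) :
    IntervalIntegrable (fun x => f.eval x) MeasureTheory.volume (0:ℝ) 1 :=
  (f.continuous_aeval).intervalIntegrable 0 1

lemma J_add (f g : ℝ[X]) : J (f + g) = J f + J g := by
  simp only [J, eval_add]
  exact integral_add (J_intervalIntegrable f) (J_intervalIntegrable g)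

lemma J_smul (c : ℝ) (f : ℝ[X]) : J (c • f) = c * J f := by
  rw [J, J, ← integral_const_mul]
  refine integral_congr fun x _ => ?_
  simp

lemma J_sub (f g : ℝ[X]) : J (f - g) = J f - J g := by
  have := J_add (f - g) g; simp at this; linarith

lemma J_sum {α : Type*} (s : Finset α) (f : α → ℝ[X]) :
    J (∑ a ∈ s, f a) = ∑ a ∈ s, J (f a) := by
  classical
  induction s using Finset.induction with
  | empty => simp [J]
  | insert _ _ h ih => rw [Finset.sum_insert h, J_add, ih, Finset.sum_insert h]

lemma J_deriv (f : ℝ[X]) : J (derivative f) = f.eval 1 - f.eval 0 := by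
  rw [J]
  rw [show (fun x => (derivative f).eval x) = deriv (fun x => f.eval x) from
    (funext fun x => (Polynomial.deriv (p := f) (x := x)).symm)]
  exact integral_deriv_eq_sub (fun x _ => f.differentiable_aeval x) (by
    rw [show deriv (fun x => f.eval x) = fun x => (derivative f).eval x from
      funext fun x => Polynomial.deriv (p := f) (x := x)]
    exact J_intervalIntegrable _)

lemma J_sq_nonneg (f : ℝ[X]) : 0 ≤ J (f * f) := by
  refine intervalIntegral.integral_nonneg (by norm_num) fun x _ => ?_
  rw [eval_mul]
  exact mul_self_nonneg _

lemma J_ibp (f g : ℝ[X]) :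
    J (derivative f * g) = f.eval 1 * g.eval 1 - f.eval 0 * g.eval 0 - J (f * derivative g) := by
  have h := J_deriv (f * g)
  rw [derivative_mul] at h
  have h2 := J_add (derivative f * g) (f * derivative g)
  rw [h] at h2
  simp only [eval_mul] at h2 ⊢
  linarith

lemma J_ibp_iter (k : ℕ) (f : ℝ[X])
    (h0 : ∀ i < k, (derivative^[i] f).eval 0 = 0)
    (h1 : ∀ i < k, (derivative^[i] f).eval 1 = 0) (g : ℝ[X]) :
    J (derivative^[k] f * g) = (-1 : ℝ)^k * J (f * derivative^[k] g) := by
  induction k generalizing g with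
  | zero => simp
  | succ k ih =>
    rw [Function.iterate_succ_apply', J_ibp,
      h0 k (Nat.lt_succ_self k), h1 k (Nat.lt_succ_self k),
      ih (fun i hi => h0 i (hi.trans (Nat.lt_succ_self k)))
         (fun i hi => h1 i (hi.trans (Nat.lt_succ_self k))) (derivative g),
      ← Function.iterate_succ_apply]
    ring

lemma pow_sub_dvd_iterate_derivative (a : ℝ) (k i : ℕ) (f : ℝ[X])
    (h : (X - C a) ^ k ∣ f) : (X - C a) ^ (k - i) ∣ derivative^[i] f := by
  induction i generalizing f k with
  | zero => simpa using h
  | succ i ih =>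
    rw [Function.iterate_succ_apply]
    have hstep : (X - C a) ^ (k - 1) ∣ derivative f := by
      obtain ⟨g, rfl⟩ := h
      rw [derivative_mul, derivative_pow, derivative_X_sub_C]
      rcases Nat.eq_zero_or_pos k with hk | hk
      · simp [hk]
      · have hkk : (X - C a) ^ k = (X - C a) ^ (k-1) * (X - C a) := by
          rw [← pow_succ, Nat.sub_add_cancel hk]
        refine dvd_add ?_ ?_
        · exact ⟨(k:ℝ[X]) * g, by rw [C_eq_natCast]; ring⟩
        · rw [hkk]; exact ⟨(X - C a) * derivative g, by ring⟩
    have := ih (k - 1) _ hstep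
    rwa [Nat.sub_sub, Nat.add_comm 1 i] at this

noncomputable def F (k : ℕ) : ℝ[X] := X^k * ((1:ℝ[X]) - X)^k

lemma F_boundary0 (k i : ℕ) (hi : i < k) : (derivative^[i] (F k)).eval 0 = 0 := by
  have h : (X - C (0:ℝ)) ^ k ∣ F k := by
    rw [C_0, sub_zero]; exact Dvd.intro _ rfl
  obtain ⟨g, hg⟩ := pow_sub_dvd_iterate_derivative 0 k i _ h
  rw [hg]
  simp [zero_pow (Nat.sub_ne_zero_of_lt hi)]

lemma F_boundary1 (k i : ℕ) (hi : i < k) : (derivative^[i] (F k)).eval 1 = 0 := by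
  have h : (X - C (1:ℝ)) ^ k ∣ F k := by
    refine ⟨(-1)^k * X^k, ?_⟩
    have h1 : ((1:ℝ[X]) - X) = -(X - C 1) := by rw [C_1]; ring
    rw [F, h1, neg_pow]; ring
  obtain ⟨g, hg⟩ := pow_sub_dvd_iterate_derivative 1 k i _ h
  rw [hg]
  simp [zero_pow (Nat.sub_ne_zero_of_lt hi)]

lemma J_Xpow (j : ℕ) : J (X^j) = 1 / (j+1) := by
  rw [J]
  simp only [eval_pow, eval_X]
  rw [integral_pow]
  simp

lemma J_beta (k j : ℕ) : J (X^j * ((1:ℝ[X]) - X)^k)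
    = (Nat.factorial j) * (Nat.factorial k) / (Nat.factorial (j+k+1)) := by
  induction k generalizing j with
  | zero =>
    simp only [pow_zero, mul_one, J_Xpow, Nat.factorial_zero, Nat.factorial_succ]
    have : (0:ℝ) < Nat.factorial j := by positivity
    push_cast
    field_simp
  | succ k ih =>
    have hder : derivative (X^(j+1) * ((1:ℝ[X]) - X)^(k+1))
        = ((j:ℝ)+1) • (X^j * ((1:ℝ[X]) - X)^(k+1)) - ((k:ℝ)+1) • (X^(j+1) * ((1:ℝ[X]) - X)^k) := by
      rw [derivative_mul, derivative_pow, derivative_pow]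
      simp only [derivative_X, derivative_sub, derivative_one, zero_sub, smul_eq_C_mul]
      push_cast
      ring
    have h0 : J (derivative (X^(j+1) * ((1:ℝ[X]) - X)^(k+1))) = 0 := by
      rw [J_deriv]; simp
    rw [hder] at h0
    have hsub : J (((j:ℝ)+1) • (X^j * ((1:ℝ[X]) - X)^(k+1)) - ((k:ℝ)+1) • (X^(j+1) * ((1:ℝ[X]) - X)^k))
        = ((j:ℝ)+1) * J (X^j * ((1:ℝ[X]) - X)^(k+1)) - ((k:ℝ)+1) * J (X^(j+1) * ((1:ℝ[X]) - X)^k) := by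
      rw [sub_eq_add_neg, J_add, ← neg_smul, J_smul, J_smul]; ring
    rw [hsub] at h0
    have hj : ((j:ℝ)+1) ≠ 0 := by positivity
    rw [ih (j+1)] at h0
    have hgoal : J (X^j * ((1:ℝ[X]) - X)^(k+1))
        = ((k:ℝ)+1) * ((Nat.factorial (j+1)) * (Nat.factorial k) / (Nat.factorial (j+1+k+1))) / ((j:ℝ)+1) := by
      field_simp at h0 ⊢
      linarith
    rw [hgoal]
    rw [Nat.factorial_succ j, Nat.factorial_succ k, show j+1+k+1 = j+(k+1)+1 by ring]
    have hfac : (0:ℝ) < Nat.factorial (j+(k+1)+1) := by positivity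
    push_cast
    field_simp

lemma neg_one_pow_sub_int (j k : ℕ) (h : k ≤ j) : (-1:ℤ)^(j-k) = (-1)^j * (-1)^k := by
  obtain ⟨m, rfl⟩ := Nat.exists_eq_add_of_le h
  rw [Nat.add_sub_cancel_left, pow_add, mul_comm ((-1:ℤ)^k), mul_assoc, ← mul_pow]
  norm_num

lemma bracket_zero (j : ℕ) (hj : j ≠ 0) :
    (∑ k ∈ range (j+1), (-1:ℤ)^k * (Nat.choose (2*j) (j-k)))
      - ∑ i ∈ range j, (-1:ℤ)^i * (Nat.choose (2*j) (j-i-1)) = 0 := by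
  have halt : (∑ m ∈ range (2*j+1), (-1:ℤ)^m * (Nat.choose (2*j) m)) = 0 :=
    Int.alternating_sum_range_choose_of_ne (by omega)
  have hsplit : (∑ m ∈ range (2*j+1), (-1:ℤ)^m * (Nat.choose (2*j) m))
      = (∑ m ∈ range (j+1), (-1:ℤ)^m * (Nat.choose (2*j) m))
        + ∑ i ∈ range j, (-1:ℤ)^(j+1+i) * (Nat.choose (2*j) (j+1+i)) := by
    rw [range_eq_Ico, ← Finset.sum_Ico_consecutive _ (by omega : 0 ≤ j+1) (by omega : j+1 ≤ 2*j+1)]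
    have l1 : (∑ m ∈ Ico 0 (j+1), (-1:ℤ)^m * (Nat.choose (2*j) m))
        = ∑ m ∈ range (j+1), (-1:ℤ)^m * (Nat.choose (2*j) m) := by rw [range_eq_Ico]
    have l2 : (∑ m ∈ Ico (j+1) (2*j+1), (-1:ℤ)^m * (Nat.choose (2*j) m))
        = ∑ i ∈ range j, (-1:ℤ)^(j+1+i) * (Nat.choose (2*j) (j+1+i)) := by
      rw [Finset.sum_Ico_eq_sum_range]
      apply Finset.sum_congr
      · congr 1; omega
      · intro i _; rfl
    rw [l1, l2]
  have hrefl : (∑ m ∈ range (j+1), (-1:ℤ)^m * (Nat.choose (2*j) m))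
      = ∑ k ∈ range (j+1), (-1:ℤ)^(j-k) * (Nat.choose (2*j) (j-k)) := by
    rw [← Finset.sum_range_reflect]
    apply Finset.sum_congr rfl
    intro k hk
    congr 2 <;> omega
  rw [hsplit, hrefl] at halt
  have h2 : ((-1:ℤ)^j) * ((∑ k ∈ range (j+1), (-1:ℤ)^(j-k) * (Nat.choose (2*j) (j-k)))
        + ∑ i ∈ range j, (-1:ℤ)^(j+1+i) * (Nat.choose (2*j) (j+1+i))) = 0 := by
    rw [halt, mul_zero]
  rw [mul_add, Finset.mul_sum, Finset.mul_sum] at h2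
  have hsq : (-1:ℤ)^j * (-1)^j = 1 := by rw [← mul_pow]; norm_num
  have e1 : ∀ k ∈ range (j+1), (-1:ℤ)^j * ((-1:ℤ)^(j-k) * (Nat.choose (2*j) (j-k)))
      = (-1:ℤ)^k * (Nat.choose (2*j) (j-k)) := by
    intro k hk
    rw [neg_one_pow_sub_int j k (by simp at hk; omega)]
    rw [← mul_assoc, ← mul_assoc, ← mul_pow]
    norm_num
  have e2 : ∀ i ∈ range j, (-1:ℤ)^j * ((-1:ℤ)^(j+1+i) * (Nat.choose (2*j) (j+1+i)))
      = -((-1:ℤ)^i * (Nat.choose (2*j) (j-i-1))) := by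
    intro i hi
    simp only [mem_range] at hi
    have hc : Nat.choose (2*j) (j+1+i) = Nat.choose (2*j) (j-i-1) := by
      rw [← Nat.choose_symm (by omega : j+1+i ≤ 2*j)]
      congr 1; omega
    rw [hc, pow_add, pow_add]
    linear_combination (-((-1:ℤ)^i * ((Nat.choose (2*j) (j-i-1)) : ℤ))) * hsq
  rw [Finset.sum_congr rfl e1, Finset.sum_congr rfl e2, Finset.sum_neg_distrib] at h2
  linarith [h2]

lemma A_identity (j : ℕ) :
    (∑ k ∈ range (j+1), (-1:ℤ)^k * (2*k+1) * (Nat.choose (2*j+1) (j-k)))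
      = if j = 0 then 1 else 0 := by
  rcases eq_or_ne j 0 with rfl | hj
  · simp
  · rw [if_neg hj]
    have point : ∀ k ∈ range (j+1),
        (-1:ℤ)^k * (2*k+1) * (Nat.choose (2*j+1) (j-k))
          = (2*(j:ℤ)+1) * ((-1:ℤ)^k * (Nat.choose (2*j) (j-k)))
            - (2*(j:ℤ)+1) * (if k < j then (-1:ℤ)^k * (Nat.choose (2*j) (j-k-1)) else 0) := by
      intro k hk
      simp only [mem_range] at hk
      rcases eq_or_lt_of_le (Nat.lt_succ_iff.mp hk) with rfl | hkj
      · simp [mul_comm]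
      · rw [if_pos hkj]
        have f1 : (2*j+1) * (Nat.choose (2*j) (j-k-1)) = (j-k) * (Nat.choose (2*j+1) (j-k)) := by
          have h := Nat.add_one_mul_choose_eq (2*j) (j-k-1)
          rw [show j-k-1+1 = j-k by omega] at h
          rw [h, mul_comm]
        have f2 : Nat.choose (2*j+1) (j-k) = Nat.choose (2*j) (j-k) + Nat.choose (2*j) (j-k-1) := by
          have h := Nat.choose_succ_succ (2*j) (j-k-1)
          simp only [Nat.succ_eq_add_one] at h
          rw [show j-k-1+1 = j-k by omega] at h
          omega
        have hjk : ((j-k : ℕ) : ℤ) = (j:ℤ) - k := by omega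
        have f1' : (2*(j:ℤ)+1) * (Nat.choose (2*j) (j-k-1)) = ((j:ℤ)-k) * (Nat.choose (2*j+1) (j-k)) := by
          have := congrArg (fun n : ℕ => (n : ℤ)) f1
          push_cast at this
          rw [hjk] at this
          linarith
        have f2' : ((Nat.choose (2*j+1) (j-k) : ℤ)) = (Nat.choose (2*j) (j-k)) + (Nat.choose (2*j) (j-k-1)) := by
          exact_mod_cast congrArg (fun n : ℕ => (n : ℤ)) f2
        have expand : (2*(j:ℤ)+1) * (Nat.choose (2*j) (j-k)) - (2*(j:ℤ)+1) * (Nat.choose (2*j) (j-k-1))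
            = (2*(k:ℤ)+1) * (Nat.choose (2*j+1) (j-k)) := by
          have h3 : (2*(j:ℤ)+1) * (Nat.choose (2*j) (j-k))
              = (2*(j:ℤ)+1) * (Nat.choose (2*j+1) (j-k)) - (2*(j:ℤ)+1) * (Nat.choose (2*j) (j-k-1)) := by
            rw [f2']; ring
          rw [h3, f1']
          ring
        calc (-1:ℤ)^k * (2*k+1) * (Nat.choose (2*j+1) (j-k))
            = (-1:ℤ)^k * ((2*(k:ℤ)+1) * (Nat.choose (2*j+1) (j-k))) := by ring
          _ = (-1:ℤ)^k * ((2*(j:ℤ)+1) * (Nat.choose (2*j) (j-k)) - (2*(j:ℤ)+1) * (Nat.choose (2*j) (j-k-1))) := by rw [expand]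
          _ = _ := by ring
    rw [Finset.sum_congr rfl point, Finset.sum_sub_distrib, ← Finset.mul_sum, ← Finset.mul_sum]
    have hite : (∑ k ∈ range (j+1), (if k < j then (-1:ℤ)^k * (Nat.choose (2*j) (j-k-1)) else 0))
        = ∑ i ∈ range j, (-1:ℤ)^i * (Nat.choose (2*j) (j-i-1)) := by
      rw [Finset.sum_range_succ, if_neg (lt_irrefl j), add_zero]
      apply Finset.sum_congr rfl
      intro i hi
      rw [if_pos (mem_range.mp hi)]
    rw [hite, ← mul_sub, bracket_zero j hj, mul_zero]

noncomputable def K (p : ℕ) : ℝ[X] :=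
  ∑ k ∈ range (p+1), ((2*(k:ℝ)+1)/(Nat.factorial k)) • derivative^[k] (F k)

lemma J_term (k j : ℕ) : J (derivative^[k] (F k) * X^j)
    = (-1:ℝ)^k * (Nat.descFactorial j k) *
      ((Nat.factorial j) * (Nat.factorial k) / (Nat.factorial (j+k+1))) := by
  rw [J_ibp_iter k (F k) (F_boundary0 k) (F_boundary1 k) (X^j)]
  rw [iterate_derivative_X_pow_eq_smul]
  rw [mul_smul_comm, J_smul]
  rcases le_or_gt k j with hkj | hkj
  · have hX : F k * X^(j-k) = X^j * ((1:ℝ[X]) - X)^k := by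
      rw [F, mul_right_comm, ← pow_add, Nat.add_sub_cancel' hkj]
    rw [hX, J_beta]
    ring
  · rw [Nat.descFactorial_eq_zero_iff_lt.mpr hkj]
    simp

lemma JKX (p j : ℕ) (hj : j ≤ p) :
    J (K p * X^j) = if j = 0 then 1 else 0 := by
  rw [K, Finset.sum_mul, J_sum]
  have hterm : ∀ k ∈ range (p+1),
      J ((((2*(k:ℝ)+1)/(Nat.factorial k)) • derivative^[k] (F k)) * X^j)
        = ((2*(k:ℝ)+1)/(Nat.factorial k)) * J (derivative^[k] (F k) * X^j) := by
    intro k _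
    rw [smul_mul_assoc, J_smul]
  rw [Finset.sum_congr rfl hterm]
  -- restrict to range (j+1)
  have hzero : ∀ k ∈ range (p+1), k ∉ range (j+1) →
      ((2*(k:ℝ)+1)/(Nat.factorial k)) * J (derivative^[k] (F k) * X^j) = 0 := by
    intro k _ hk
    simp only [mem_range, not_lt] at hk
    rw [J_term, Nat.descFactorial_eq_zero_iff_lt.mpr (by omega)]
    simp
  rw [← Finset.sum_subset (Finset.range_subset_range.mpr (by omega)) hzero]
  -- pointwise value
  have hval : ∀ k ∈ range (j+1),
      ((2*(k:ℝ)+1)/(Nat.factorial k)) * J (derivative^[k] (F k) * X^j)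
        = ((Nat.factorial j : ℝ)^2 / (Nat.factorial (2*j+1)))
            * (((-1:ℤ)^k * (2*k+1) * (Nat.choose (2*j+1) (j-k)) : ℤ) : ℝ) := by
    intro k hk
    simp only [mem_range] at hk
    have hkj : k ≤ j := by omega
    rw [J_term]
    have hdesc : ((Nat.descFactorial j k : ℝ)) = (Nat.factorial k) * (Nat.choose j k) := by
      rw [Nat.descFactorial_eq_factorial_mul_choose]
      push_cast; ring
    have hC1 : ((Nat.choose j k : ℝ)) = (Nat.factorial j) / ((Nat.factorial k) * (Nat.factorial (j-k))) := by
      rw [eq_div_iff (by positivity)]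
      rw [← mul_assoc]
      exact_mod_cast congrArg (fun n : ℕ => (n:ℝ)) (Nat.choose_mul_factorial_mul_factorial hkj)
    have hC2 : ((Nat.choose (2*j+1) (j-k) : ℝ))
        = (Nat.factorial (2*j+1)) / ((Nat.factorial (j-k)) * (Nat.factorial (j+k+1))) := by
      rw [eq_div_iff (by positivity)]
      rw [← mul_assoc]
      have h := Nat.choose_mul_factorial_mul_factorial (show j-k ≤ 2*j+1 by omega)
      rw [show 2*j+1-(j-k) = j+k+1 by omega] at h
      exact_mod_cast congrArg (fun n : ℕ => (n:ℝ)) h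
    push_cast
    rw [hdesc, hC1, hC2]
    have h1 : (0:ℝ) < Nat.factorial k := by positivity
    have h2 : (0:ℝ) < Nat.factorial (j-k) := by positivity
    have h3 : (0:ℝ) < Nat.factorial (j+k+1) := by positivity
    have h4 : (0:ℝ) < Nat.factorial (2*j+1) := by positivity
    field_simp
  rw [Finset.sum_congr rfl hval, ← Finset.mul_sum]
  rw [show (∑ k ∈ range (j+1), (((-1:ℤ)^k * (2*k+1) * (Nat.choose (2*j+1) (j-k)) : ℤ) : ℝ))
      = (((∑ k ∈ range (j+1), (-1:ℤ)^k * (2*k+1) * (Nat.choose (2*j+1) (j-k))) : ℤ) : ℝ) by push_cast; rfl]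
  rw [A_identity]
  rcases eq_or_ne j 0 with rfl | hj0
  · norm_num
  · rw [if_neg hj0, if_neg hj0]
    simp

lemma K_natDegree (p : ℕ) : (K p).natDegree ≤ p := by
  refine Polynomial.natDegree_sum_le_of_forall_le _ _ fun k hk => ?_
  simp only [mem_range] at hk
  refine (Polynomial.natDegree_smul_le _ _).trans ?_
  refine (Polynomial.natDegree_iterate_derivative _ _).trans ?_
  have hF : (F k).natDegree ≤ 2*k := by
    rw [F]
    refine (Polynomial.natDegree_mul_le).trans ?_
    have h1 : (X^k : ℝ[X]).natDegree ≤ k := by simp [Polynomial.natDegree_X_pow]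
    have h2 : (((1:ℝ[X]) - X)^k).natDegree ≤ k := by
      refine (Polynomial.natDegree_pow_le).trans ?_
      have hh : ((1:ℝ[X]) - X).natDegree ≤ 1 := by
        refine (Polynomial.natDegree_sub_le _ _).trans ?_
        simp
      calc k * ((1:ℝ[X]) - X).natDegree ≤ k * 1 := Nat.mul_le_mul_left k hh
        _ = k := by omega
    omega
  omega

lemma K_reproduce (p : ℕ) (q : ℝ[X]) (hq : q.natDegree ≤ p) :
    J (K p * q) = q.eval 0 := by
  have hrepr : K p * q = ∑ j ∈ range (p+1), q.coeff j • (K p * X^j) := by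
    conv_lhs => rw [q.as_sum_range' (p+1) (by omega)]
    rw [Finset.mul_sum]
    refine Finset.sum_congr rfl fun j _ => ?_
    rw [← Polynomial.C_mul_X_pow_eq_monomial, Polynomial.smul_eq_C_mul]
    ring
  rw [hrepr, J_sum]
  have : ∀ j ∈ range (p+1), q.coeff j • J (K p * X^j) = if j = 0 then q.coeff 0 else 0 := by
    intro j hj
    simp only [mem_range] at hj
    rw [JKX p j (by omega)]
    rcases eq_or_ne j 0 with rfl | h
    · simp
    · simp [h]
  rw [show (∑ j ∈ range (p+1), J (q.coeff j • (K p * X^j)))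
      = ∑ j ∈ range (p+1), q.coeff j • J (K p * X^j) from
    Finset.sum_congr rfl fun j _ => J_smul _ _]
  rw [Finset.sum_congr rfl this, Finset.sum_ite_eq' (range (p+1)) 0]
  simp [Polynomial.coeff_zero_eq_eval_zero]

lemma K_eval_zero (p : ℕ) : (K p).eval 0 = ((p:ℝ)+1)^2 := by
  rw [K]
  rw [Polynomial.eval_finset_sum]
  have hterm : ∀ k ∈ range (p+1),
      (((2*(k:ℝ)+1)/(Nat.factorial k)) • derivative^[k] (F k)).eval 0 = 2*(k:ℝ)+1 := by
    intro k _
    rw [Polynomial.eval_smul, smul_eq_mul]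
    have h1 : (derivative^[k] (F k)).eval 0 = (Nat.factorial k : ℝ) := by
      rw [← Polynomial.coeff_zero_eq_eval_zero, Polynomial.coeff_iterate_derivative]
      have hc : (F k).coeff k = 1 := by
        rw [F]
        have := Polynomial.coeff_X_pow_mul (((1:ℝ[X]) - X)^k) k 0
        simp only [zero_add] at this
        rw [this, Polynomial.coeff_zero_eq_eval_zero]
        simp
      simp only [zero_add, hc]
      rw [Nat.descFactorial_self]
      simp
    rw [h1]
    have : (0:ℝ) < Nat.factorial k := by positivity
    field_simp
  rw [Finset.sum_congr rfl hterm]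
  have : ∀ n : ℕ, (∑ k ∈ range n, (2*(k:ℝ)+1)) = (n:ℝ)^2 := by
    intro n
    induction n with
    | zero => simp
    | succ n ih => rw [Finset.sum_range_succ, ih]; push_cast; ring
  rw [this]
  push_cast
  ring

/-- One-dimensional endpoint trace inequality for polynomials: for a real polynomial `q`
of degree at most `p`, `q(0)² ≤ (p+1)² ∫₀¹ q(x)² dx`. -/
theorem polynomial_endpoint_trace_inequality (p : ℕ) (q : Polynomial ℝ)
    (hq : q.natDegree ≤ p) :
    (q.eval 0) ^ 2 ≤ ((p : ℝ) + 1) ^ 2 * ∫ x in (0 : ℝ)..1, (q.eval x) ^ 2 := by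
  set A : ℝ := ((p:ℝ)+1)^2 with hA
  have hApos : 0 < A := by positivity
  set q0 : ℝ := q.eval 0 with hq0
  have hL : (∫ x in (0:ℝ)..1, (q.eval x) ^ 2) = J (q * q) := by
    rw [J]
    refine integral_congr fun x _ => ?_
    rw [Polynomial.eval_mul, sq]
  rw [hL]
  have h1 : J (K p * q) = q0 := K_reproduce p q hq
  have h2 : J (K p * K p) = A := by
    rw [K_reproduce p (K p) (K_natDegree p), K_eval_zero]
  have hexp : (A • q - q0 • K p) * (A • q - q0 • K p)
      = (A*A) • (q*q) - ((A*q0) • (K p * q) + (A*q0) • (K p * q)) + (q0*q0) • (K p * K p) := by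
    simp only [Polynomial.smul_eq_C_mul, Polynomial.C_mul]
    ring
  have hnn := J_sq_nonneg (A • q - q0 • K p)
  rw [hexp, J_add, J_sub, J_add, J_smul, J_smul, J_smul, h1, h2] at hnn
  nlinarith [hnn, hApos, J_sq_nonneg q]
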